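/- In a quasi-abelian category, universal monomorphisms are stable under pullback: if f : A ⟶ B is a universal monomorphism and δ : Z ⟶ B is an arbitrary morphism, then in the pullback square of f along δ the projection P ⟶ Z is again a universal monomorphism. -/

import Mathlib

open CategoryTheory CategoryTheory.Limits

universe v u

/-- A monomorphism `f` is a *universal monomorphism* if it is stable under pushout:
for every morphism `g : A ⟶ X`, the induced morphism `X ⟶ Y` into the pushout `Y`
of `f` and `g` is again a monomorphism. -/
def IsUniversalMono {C : Type u} [Category.{v} C] [HasPushouts C]
    {A B : C} (f : A ⟶ B) : Prop :=
  Mono f ∧ ∀ ⦃X : C⦄ (g : A ⟶ X), Mono (pushout.inr f g)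

/-- In a quasi-abelian category (preabelian, with cokernels stable under pullback and
kernels stable under pushout), universal monomorphisms are stable under pullback. -/
theorem universalMono_stable_under_pullback
    {C : Type u} [Category.{v} C] [Preadditive C]
    [HasKernels C] [HasCokernels C] [HasPullbacks C] [HasPushouts C]
    (hcoker : ∀ {A B Z : C} (f : A ⟶ B), Nonempty (NormalEpi f) →
      ∀ (δ : Z ⟶ B), Nonempty (NormalEpi (pullback.snd f δ)))
    (hker : ∀ {A B X : C} (f : A ⟶ B), Nonempty (NormalMono f) →
      ∀ (g : A ⟶ X), Nonempty (NormalMono (pushout.inr f g)))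
    {A B Z : C} (f : A ⟶ B) (hf : IsUniversalMono f) (δ : Z ⟶ B) :
    IsUniversalMono (pullback.snd f δ) := by
  clear hcoker
  obtain ⟨hmf, hpush⟩ := hf
  haveI := hmf
  -- the category has a zero object, hence binary biproducts
  haveI : HasZeroObject C := by
    refine ⟨kernel (𝟙 A), ?_⟩
    rw [IsZero.iff_id_eq_zero, ← cancel_mono (kernel.ι (𝟙 A))]
    have := kernel.condition (𝟙 A)
    rw [Category.comp_id] at this
    simp [this]
  haveI : HasBinaryProducts C := hasBinaryProducts_of_hasTerminal_and_pullbacks C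
  haveI : HasBinaryBiproducts C := HasBinaryBiproducts.of_hasBinaryProducts
  constructor
  · infer_instance
  · intro X g
    set q : pullback f δ ⟶ A := pullback.fst f δ with hq
    set p : pullback f δ ⟶ Z := pullback.snd f δ with hp
    -- the graph embedding of the pullback is a kernel
    set m : pullback f δ ⟶ A ⊞ Z := biprod.lift q p with hm
    have hme : m ≫ biprod.desc f (-δ) = 0 := by
      simp only [hm, biprod.lift_desc, Preadditive.comp_neg]
      rw [← sub_eq_add_neg, sub_eq_zero, hq, hp, pullback.condition]
    haveI hmono_m : Mono m := by
      have : m ≫ biprod.snd = p := by simp [hm]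
      haveI : Mono (m ≫ biprod.snd) := by rw [this]; infer_instance
      exact mono_of_mono m biprod.snd
    have nm : NormalMono m :=
      { Z := B
        g := biprod.desc f (-δ)
        w := hme
        isLimit := KernelFork.IsLimit.ofι' m hme (fun {T} t ht => by
          have h1 : (t ≫ biprod.fst) ≫ f = (t ≫ biprod.snd) ≫ δ := by
            have h0 : t ≫ biprod.fst ≫ f + -(t ≫ biprod.snd ≫ δ) = 0 := by
              have := ht
              simp only [biprod.desc_eq, Preadditive.comp_add, Preadditive.comp_neg,
                Category.assoc, Preadditive.neg_comp] at this ⊢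
              simpa using this
            rw [add_neg_eq_zero] at h0
            simpa using h0
          refine ⟨pullback.lift (t ≫ biprod.fst) (t ≫ biprod.snd) h1, ?_⟩
          apply biprod.hom_ext <;> simp [hm, hq, hp]
          · exact pullback.lift_fst _ _ _
          · exact pullback.lift_snd _ _ _) }
    -- push out the kernel `m` along `g`: the resulting map `n` is a (normal) mono
    obtain ⟨nn⟩ := hker m ⟨nm⟩ g
    haveI : NormalMono (pushout.inr m g) := nn
    haveI hmono_n : Mono (pushout.inr m g) := inferInstance
    -- `u = f ⊞ 𝟙` is a pushout of `f`, so its pushouts are pushouts of `f`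
    set u : A ⊞ Z ⟶ B ⊞ Z := biprod.map f (𝟙 Z) with hu
    have sq1 : IsPushout f (biprod.inl : A ⟶ A ⊞ Z) (biprod.inl : B ⟶ B ⊞ Z) u := by
      refine IsPushout.of_isColimit' ⟨by simp [hu]⟩ ?_
      refine PushoutCocone.IsColimit.mk _
        (fun s => biprod.desc s.inl (biprod.inr ≫ s.inr)) (fun s => by simp) ?_ ?_
      · intro s
        apply biprod.hom_ext'
        · simpa [hu] using s.condition
        · simp [hu]
      · intro s mm h1 h2
        apply biprod.hom_ext'
        · simpa using h1
        · have h3 : (biprod.inr : Z ⟶ B ⊞ Z) ≫ mm = (biprod.inr : Z ⟶ A ⊞ Z) ≫ u ≫ mm := by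
            simp [hu]
          rw [h3, h2]
          simp
    have sq2 : IsPushout u (pushout.inl m g) (pushout.inl u (pushout.inl m g))
        (pushout.inr u (pushout.inl m g)) := IsPushout.of_hasPushout _ _
    have sq3 := sq1.paste_vert sq2
    haveI : Mono (pushout.inr f (biprod.inl ≫ pushout.inl m g)) :=
      hpush (biprod.inl ≫ pushout.inl m g)
    haveI hmono_inrU : Mono (pushout.inr u (pushout.inl m g)) := by
      rw [← sq3.inr_isoPushout_inv]
      exact mono_comp _ _
    -- the comparison map from the pushout of `p` along `g`
    have key : p ≫ biprod.lift δ (𝟙 Z) = m ≫ u := by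
      apply biprod.hom_ext <;> simp [hm, hu, ← pullback.condition, hq, hp]
    have hcomm : p ≫ (biprod.lift δ (𝟙 Z) ≫ pushout.inl u (pushout.inl m g)) =
        g ≫ (pushout.inr m g ≫ pushout.inr u (pushout.inl m g)) := by
      rw [← Category.assoc, key, Category.assoc, pushout.condition, ← Category.assoc,
        pushout.condition, Category.assoc]
    haveI : Mono (pushout.inr p g ≫ pushout.desc _ _ hcomm) := by
      rw [pushout.inr_desc]
      exact mono_comp _ _
    exact mono_of_mono (pushout.inr p g) (pushout.desc _ _ hcomm)
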